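/- Let ξ ∈ ℝ² with |ξ₁| < |ξ|²/4, t ≥ 0, and let λ± = (-|ξ|² ± √(|ξ|⁴ - 4ξ₁²))/2. Then the multiplier M̂₁(ξ,t) = iξ₁(e^{λ₋t} - e^{λ₊t})/(λ₊ - λ₋) satisfies |M̂₁(ξ,t)| ≤ C (|ξ₁|/|ξ|²) e^{-ξ₁² t/|ξ|²} for an absolute constant C. -/

import Mathlib

/-- On `D₄` (`|ξ₁| < |ξ|²/4`), `t ≥ 0`, with real eigenvalues
`λ± = (-|ξ|² ± √(|ξ|⁴-4ξ₁²))/2`, the multiplier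
`M̂₁(ξ,t) = iξ₁(e^{λ₋t} - e^{λ₊t})/(λ₊-λ₋)` satisfies
`|M̂₁(ξ,t)| ≤ C (|ξ₁|/|ξ|²) e^{-ξ₁² t/|ξ|²}` for an absolute constant `C`. -/
theorem stmt2 :
    ∃ C > 0, ∀ ξ₁ ξ₂ t : ℝ, 0 ≤ t →
      |ξ₁| < (ξ₁ ^ 2 + ξ₂ ^ 2) / 4 →
      (let s : ℝ := ξ₁ ^ 2 + ξ₂ ^ 2
       let lamp : ℝ := (-s + Real.sqrt (s ^ 2 - 4 * ξ₁ ^ 2)) / 2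
       let lamm : ℝ := (-s - Real.sqrt (s ^ 2 - 4 * ξ₁ ^ 2)) / 2
       ‖Complex.I * (ξ₁ : ℂ) *
            (Complex.exp ((lamm * t : ℝ) : ℂ) - Complex.exp ((lamp * t : ℝ) : ℂ)) /
            ((lamp : ℂ) - (lamm : ℂ))‖
         ≤ C * (|ξ₁| / s) * Real.exp (-(ξ₁ ^ 2) * t / s)) := by
  refine ⟨2, by norm_num, ?_⟩
  intro ξ₁ ξ₂ t ht h
  intro s lamp lamm
  have hsdef : s = ξ₁ ^ 2 + ξ₂ ^ 2 := rfl
  have hlampdef : lamp = (-s + Real.sqrt (s ^ 2 - 4 * ξ₁ ^ 2)) / 2 := rfl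
  have hlammdef : lamm = (-s - Real.sqrt (s ^ 2 - 4 * ξ₁ ^ 2)) / 2 := rfl
  clear_value lamm lamp s
  have hs0 : 0 < s := by
    have := abs_nonneg ξ₁
    rw [hsdef]; linarith [h]
  have hx2 : ξ₁ ^ 2 < s ^ 2 / 16 := by
    rw [hsdef] at *
    nlinarith [sq_abs ξ₁, abs_nonneg ξ₁]
  set d : ℝ := Real.sqrt (s ^ 2 - 4 * ξ₁ ^ 2) with hd
  have hdnn : 0 ≤ d := Real.sqrt_nonneg _
  have hd2 : d ^ 2 = s ^ 2 - 4 * ξ₁ ^ 2 := Real.sq_sqrt (by nlinarith [sq_nonneg s])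
  have hdlb : s / 2 ≤ d := by nlinarith [sq_nonneg s, sq_nonneg (d - s / 2)]
  have hd0 : 0 < d := lt_of_lt_of_le (by positivity) hdlb
  have hfrac : 2 * ξ₁ ^ 2 / s ≤ s := by rw [div_le_iff₀ hs0]; nlinarith [sq_nonneg s]
  have hub : d ≤ s - 2 * ξ₁ ^ 2 / s := by
    have hnn : 0 ≤ s - 2 * ξ₁ ^ 2 / s := by linarith
    have hsq : s ^ 2 - 4 * ξ₁ ^ 2 ≤ (s - 2 * ξ₁ ^ 2 / s) ^ 2 := by
      have he : (s - 2 * ξ₁ ^ 2 / s) ^ 2 = s ^ 2 - 4 * ξ₁ ^ 2 + 4 * (ξ₁ ^ 2 / s) ^ 2 := by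
        field_simp; ring
      nlinarith [sq_nonneg (ξ₁ ^ 2 / s)]
    calc d ≤ Real.sqrt ((s - 2 * ξ₁ ^ 2 / s) ^ 2) := Real.sqrt_le_sqrt hsq
    _ = s - 2 * ξ₁ ^ 2 / s := Real.sqrt_sq hnn
  have hlamp : lamp ≤ -(ξ₁ ^ 2) / s := by
    rw [hlampdef, neg_div]
    have : ξ₁ ^ 2 / s = 2 * ξ₁ ^ 2 / s / 2 := by ring
    rw [this]; linarith
  have hlamm : lamm ≤ -(ξ₁ ^ 2) / s := by
    rw [hlammdef]
    rw [hlampdef] at hlamp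
    linarith
  set E : ℝ := Real.exp (-(ξ₁ ^ 2) * t / s) with hE
  have hEp : Real.exp (lamp * t) ≤ E := by
    apply Real.exp_le_exp.2
    calc lamp * t ≤ (-(ξ₁ ^ 2) / s) * t := mul_le_mul_of_nonneg_right hlamp ht
    _ = -(ξ₁ ^ 2) * t / s := by ring
  have hEm : Real.exp (lamm * t) ≤ E := by
    apply Real.exp_le_exp.2
    calc lamm * t ≤ (-(ξ₁ ^ 2) / s) * t := mul_le_mul_of_nonneg_right hlamm ht
    _ = -(ξ₁ ^ 2) * t / s := by ring
  have hdiff : |Real.exp (lamm * t) - Real.exp (lamp * t)| ≤ E := by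
    rw [abs_sub_le_iff]
    constructor <;> nlinarith [Real.exp_pos (lamm * t), Real.exp_pos (lamp * t)]
  have hlamd : lamp - lamm = d := by rw [hlampdef, hlammdef]; ring
  have habs : ‖Complex.I * (ξ₁ : ℂ) *
      (Complex.exp ((lamm * t : ℝ) : ℂ) - Complex.exp ((lamp * t : ℝ) : ℂ)) /
      ((lamp : ℂ) - (lamm : ℂ))‖
      = |ξ₁| * |Real.exp (lamm * t) - Real.exp (lamp * t)| / d := by
    rw [← Complex.ofReal_exp, ← Complex.ofReal_exp, ← Complex.ofReal_sub,
      ← Complex.ofReal_sub, norm_div, norm_mul, norm_mul, Complex.norm_I,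
      Complex.norm_real, Complex.norm_real, Complex.norm_real, Real.norm_eq_abs,
      Real.norm_eq_abs, Real.norm_eq_abs, one_mul,
      hlamd, abs_of_pos hd0]
  rw [habs, div_le_iff₀ hd0]
  have hE0 : 0 < E := Real.exp_pos _
  have h1 : |ξ₁| * |Real.exp (lamm * t) - Real.exp (lamp * t)| ≤ |ξ₁| * E :=
    mul_le_mul_of_nonneg_left hdiff (abs_nonneg _)
  have e1 : |ξ₁| / s * s = |ξ₁| := div_mul_cancel₀ _ hs0.ne'
  have qnn : 0 ≤ |ξ₁| / s := div_nonneg (abs_nonneg _) hs0.le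
  have h2 : |ξ₁| * E ≤ 2 * (|ξ₁| / s) * E * d := by
    have e2 : 2 * (|ξ₁| / s) * E * (s / 2) = |ξ₁| / s * s * E := by ring
    calc |ξ₁| * E = 2 * (|ξ₁| / s) * E * (s / 2) := by rw [e2, e1]
    _ ≤ 2 * (|ξ₁| / s) * E * d :=
      mul_le_mul_of_nonneg_left hdlb (by positivity)
  linarith
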